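/- arXiv:2308.08393 — 4 statements merged into one kernel-verified Lean document; each statement's English description precedes it below -/
import Mathlib

section
/- Let X be an m×3 real matrix with homogeneous coordinates X̃ := (X | 𝟏) such that X̃ᵀX̃ is invertible, let L be any m×m real matrix, let R be a 3×3 real matrix with RᵀR = I and t ∈ ℝ³, and let X̃' := (XRᵀ + 𝟏tᵀ | 𝟏). Then the projected operators built from L agree: Π(X̃')ᵀ · L · Π(X̃') = Π(X̃)ᵀ · L · Π(X̃). -/
open Matrix

/-- The projection matrix `Π(A) := I − A (AᵀA)⁻¹ Aᵀ`. -/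
noncomputable def gramProj {m n : Type*} [Fintype m] [Fintype n] [DecidableEq m]
    [DecidableEq n] (A : Matrix m n ℝ) : Matrix m m ℝ :=
  1 - A * (Aᵀ * A)⁻¹ * Aᵀ

/-- Homogeneous coordinates: append an all-ones column to the coordinate matrix. -/
noncomputable def homog {m : ℕ} (X : Matrix (Fin m) (Fin 3) ℝ) :
    Matrix (Fin m) (Fin 3 ⊕ Fin 1) ℝ :=
  Matrix.fromCols X (Matrix.of fun _ _ => (1 : ℝ))

lemma gramProj_mul_unit {m n : Type*} [Fintype m] [Fintype n] [DecidableEq m]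
    [DecidableEq n] (A : Matrix m n ℝ) (B : Matrix n n ℝ)
    (hA : IsUnit (Aᵀ * A)) (hB : IsUnit B) :
    gramProj (A * B) = gramProj A := by
  have hBT : IsUnit Bᵀ := (Matrix.isUnit_transpose _).mpr hB
  have hG : (A * B)ᵀ * (A * B) = Bᵀ * (Aᵀ * A) * B := by
    rw [Matrix.transpose_mul]; simp only [Matrix.mul_assoc]
  have hGu : IsUnit (Bᵀ * (Aᵀ * A) * B) := (hBT.mul hA).mul hB
  have hinv : (Bᵀ * (Aᵀ * A) * B)⁻¹ = B⁻¹ * (Aᵀ * A)⁻¹ * Bᵀ⁻¹ := by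
    rw [Matrix.mul_inv_rev, Matrix.mul_inv_rev, mul_assoc]
  unfold gramProj
  rw [hG, hinv, Matrix.transpose_mul]
  have hBB : B * B⁻¹ = 1 := Matrix.mul_nonsing_inv B
    ((Matrix.isUnit_iff_isUnit_det B).mp hB)
  have hBTB : Bᵀ⁻¹ * Bᵀ = 1 := Matrix.nonsing_inv_mul Bᵀ
    ((Matrix.isUnit_iff_isUnit_det Bᵀ).mp hBT)
  have main : A * B * (B⁻¹ * (Aᵀ * A)⁻¹ * Bᵀ⁻¹) * (Bᵀ * Aᵀ)
      = A * (Aᵀ * A)⁻¹ * Aᵀ := by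
    calc A * B * (B⁻¹ * (Aᵀ * A)⁻¹ * Bᵀ⁻¹) * (Bᵀ * Aᵀ)
        = A * (B * B⁻¹) * ((Aᵀ * A)⁻¹ * ((Bᵀ⁻¹ * Bᵀ) * Aᵀ)) := by
          simp only [Matrix.mul_assoc]
      _ = A * (Aᵀ * A)⁻¹ * Aᵀ := by rw [hBB, hBTB]; simp [Matrix.mul_assoc]
  rw [main]

theorem stmt4 {m : ℕ} (X : Matrix (Fin m) (Fin 3) ℝ)
    (hX : IsUnit ((homog X)ᵀ * homog X))
    (L : Matrix (Fin m) (Fin m) ℝ)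
    (R : Matrix (Fin 3) (Fin 3) ℝ) (hR : Rᵀ * R = 1) (t : Fin 3 → ℝ) :
    (gramProj (homog (X * Rᵀ + vecMulVec (1 : Fin m → ℝ) t)))ᵀ * L *
        gramProj (homog (X * Rᵀ + vecMulVec (1 : Fin m → ℝ) t)) =
      (gramProj (homog X))ᵀ * L * gramProj (homog X) := by
  set B : Matrix (Fin 3 ⊕ Fin 1) (Fin 3 ⊕ Fin 1) ℝ :=
    Matrix.fromBlocks Rᵀ 0 (Matrix.of fun _ j => t j) 1 with hBdef
  have hBu : IsUnit B := by
    rw [Matrix.isUnit_iff_isUnit_det, hBdef,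
      Matrix.det_fromBlocks_zero₁₂, Matrix.det_one, mul_one, Matrix.det_transpose]
    have : R.det * R.det = 1 := by
      have := congrArg Matrix.det hR
      rwa [Matrix.det_mul, Matrix.det_transpose, Matrix.det_one] at this
    exact IsUnit.of_mul_eq_one _ this
  have key : homog (X * Rᵀ + vecMulVec (1 : Fin m → ℝ) t) = homog X * B := by
    unfold homog
    rw [hBdef, Matrix.fromCols_mul_fromBlocks, Matrix.mul_zero, zero_add,
      Matrix.mul_one]
    have hv : (Matrix.of fun _ _ => (1 : ℝ) : Matrix (Fin m) (Fin 1) ℝ) *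
        (Matrix.of fun _ j => t j : Matrix (Fin 1) (Fin 3) ℝ) = vecMulVec (1 : Fin m → ℝ) t := by
      ext i j
      simp [Matrix.mul_apply, Matrix.vecMulVec_apply]
    rw [hv]
  rw [key, gramProj_mul_unit (homog X) B hX hBu]
end

section
/- Let Y be an N×3 real matrix with homogeneous coordinates Ỹ := (Y | 𝟏) such that ỸᵀỸ is invertible, let L be any N×N real matrix, and set Δ := Π(Ỹ)ᵀ L Π(Ỹ). Then for every N×3 real matrix Ŷ, every 3×3 real matrix R with RᵀR = I and every t ∈ ℝ³: ‖Δ·(ŶRᵀ + 𝟏tᵀ)‖_F = ‖Δ·Ŷ‖_F. -/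
open Matrix

/-- The Frobenius norm of a real matrix. -/
noncomputable def frobNorm {m n : ℕ} (A : Matrix (Fin m) (Fin n) ℝ) : ℝ :=
  Real.sqrt (∑ i, ∑ j, (A i j) ^ 2)

lemma frob_sq_eq_trace {m n : ℕ} (A : Matrix (Fin m) (Fin n) ℝ) :
    ∑ i, ∑ j, (A i j) ^ 2 = (A * Aᵀ).trace := by
  simp [Matrix.trace, Matrix.mul_apply, Matrix.diag, sq]

lemma gramProj_mul_self {m n : Type*} [Fintype m] [Fintype n] [DecidableEq m]
    [DecidableEq n] (A : Matrix m n ℝ) (h : IsUnit (Aᵀ * A)) :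
    gramProj A * A = 0 := by
  have hd : IsUnit (Aᵀ * A).det := (Matrix.isUnit_iff_isUnit_det _).mp h
  simp only [gramProj, Matrix.sub_mul, Matrix.one_mul]
  rw [Matrix.mul_assoc, Matrix.mul_assoc, Matrix.nonsing_inv_mul _ hd,
    Matrix.mul_one, sub_self]

theorem stmt11 {N : ℕ} (Y : Matrix (Fin N) (Fin 3) ℝ)
    (hY : IsUnit ((homog Y)ᵀ * homog Y)) (L : Matrix (Fin N) (Fin N) ℝ) :
    ∀ (Yh : Matrix (Fin N) (Fin 3) ℝ) (R : Matrix (Fin 3) (Fin 3) ℝ),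
      Rᵀ * R = 1 → ∀ t : Fin 3 → ℝ,
        frobNorm (((gramProj (homog Y))ᵀ * L * gramProj (homog Y)) *
            (Yh * Rᵀ + vecMulVec (1 : Fin N → ℝ) t)) =
          frobNorm (((gramProj (homog Y))ᵀ * L * gramProj (homog Y)) * Yh) := by
  intro Yh R hR t
  set P := gramProj (homog Y) with hP
  -- the ones-rank-one part is killed by P
  have hones : vecMulVec (1 : Fin N → ℝ) t =
      homog Y * Matrix.fromRows (0 : Matrix (Fin 3) (Fin 3) ℝ)
        (Matrix.of fun (_ : Fin 1) j => t j) := by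
    rw [homog, Matrix.fromCols_mul_fromRows]
    ext i j
    simp [Matrix.mul_apply, vecMulVec_apply]
  have hPones : P * vecMulVec (1 : Fin N → ℝ) t = 0 := by
    rw [hones, ← Matrix.mul_assoc, gramProj_mul_self _ hY, Matrix.zero_mul]
  have hkill : (Pᵀ * L * P) * (Yh * Rᵀ + vecMulVec (1 : Fin N → ℝ) t) =
      ((Pᵀ * L * P) * Yh) * Rᵀ := by
    rw [Matrix.mul_add, Matrix.mul_assoc (Pᵀ * L) P (vecMulVec 1 t), hPones,
      Matrix.mul_zero, add_zero, ← Matrix.mul_assoc (Pᵀ * L * P) Yh Rᵀ]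
  rw [hkill]
  set M := (Pᵀ * L * P) * Yh
  unfold frobNorm
  congr 1
  rw [frob_sq_eq_trace, frob_sq_eq_trace]
  have : M * Rᵀ * (M * Rᵀ)ᵀ = M * Mᵀ := by
    rw [Matrix.transpose_mul, Matrix.transpose_transpose, Matrix.mul_assoc,
      ← Matrix.mul_assoc Rᵀ R, hR, Matrix.one_mul]
  rw [this]
end

section
/- (Lemma 2b, transfer of global optimisers under rigid transformations.) With the notation of the sparse matching objective E, suppose (P, X̂, Ŷ) is a global minimiser of (P', X̂', Ŷ') ↦ E(X, Y, Δ_X, Δ_Y, h_X, h_Y, d_X, d_Y; P', X̂', Ŷ') over all permutation matrices P' ∈ {0,1}^{n×n} with P'𝟏ₙ = 𝟏ₙ, P'ᵀ𝟏ₙ = 𝟏ₙ and all X̂' ∈ ℝ^{M×3}, Ŷ' ∈ ℝ^{N×3}. Let R ∈ ℝ^{3×3} with RᵀR = I, det R = 1, and t ∈ ℝ³, and let X'' := XRᵀ + 𝟏tᵀ with PLBO Δ_X'' := Π(X̃'')ᵀL_XΠ(X̃''). Then (P, X̂, ŶRᵀ + 𝟏tᵀ) is a global minimiser of (P', X̂',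 Ŷ') ↦ E(X'', Y, Δ_X'', Δ_Y, h_X, h_Y, d_X, d_Y; P', X̂', Ŷ') over the same feasible set. -/
open Matrix

/-- The projected Laplace–Beltrami operator built from a stiffness matrix `L`:
`Δ_proj := Π(Z̃)ᵀ L Π(Z̃)`. -/
noncomputable def plbo {m : ℕ} (Z : Matrix (Fin m) (Fin 3) ℝ)
    (L : Matrix (Fin m) (Fin m) ℝ) : Matrix (Fin m) (Fin m) ℝ :=
  (gramProj (homog Z))ᵀ * L * gramProj (homog Z)

/-- The Euclidean norm of a real vector. -/
noncomputable def vnorm {n : ℕ} (v : Fin n → ℝ) : ℝ :=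
  Real.sqrt (∑ i, (v i) ^ 2)

/-- The sparse matching objective `E` of the paper. -/
noncomputable def objE {n M N : ℕ} (lamDef lamOri : ℝ)
    (ι : Fin n → Fin M) (κ : Fin n → Fin N)
    (X : Matrix (Fin M) (Fin 3) ℝ) (Y : Matrix (Fin N) (Fin 3) ℝ)
    (ΔX : Matrix (Fin M) (Fin M) ℝ) (ΔY : Matrix (Fin N) (Fin N) ℝ)
    (hX hY : Fin n → ℝ) (dX dY : ℝ)
    (P : Matrix (Fin n) (Fin n) ℝ)
    (Xh : Matrix (Fin M) (Fin 3) ℝ) (Yh : Matrix (Fin N) (Fin 3) ℝ) : ℝ :=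
  (1 / (n * dY)) * frobNorm (Xh.submatrix ι id - P * Y.submatrix κ id)
    + (1 / (n * dX)) * frobNorm (Yh.submatrix κ id - Pᵀ * X.submatrix ι id)
    + lamDef * ((1 / (M * dY)) * frobNorm (ΔX * Xh)
        + (1 / (N * dX)) * frobNorm (ΔY * Yh))
    + (lamOri / n) * vnorm (hX - P *ᵥ hY)

/-- `P` is a permutation matrix: entries in `{0,1}` and all row and column sums equal `1`. -/
def IsPermMat {n : ℕ} (P : Matrix (Fin n) (Fin n) ℝ) : Prop :=
  (∀ i j, P i j = 0 ∨ P i j = 1) ∧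
    P *ᵥ (1 : Fin n → ℝ) = 1 ∧ Pᵀ *ᵥ (1 : Fin n → ℝ) = 1

/- ### auxiliary lemmas -/

lemma aux_frob_sq_trace {m k : ℕ} (B : Matrix (Fin m) (Fin k) ℝ) :
    (∑ i, ∑ j, B i j ^ 2) = (B * Bᵀ).trace := by
  simp [Matrix.trace, Matrix.diag, Matrix.mul_apply, sq]

lemma aux_frob_mul_orth {m : ℕ} (A : Matrix (Fin m) (Fin 3) ℝ)
    (R : Matrix (Fin 3) (Fin 3) ℝ) (hR : Rᵀ * R = 1) :
    frobNorm (A * Rᵀ) = frobNorm A := by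
  unfold frobNorm
  rw [aux_frob_sq_trace, aux_frob_sq_trace]
  congr 2
  rw [transpose_mul, transpose_transpose, Matrix.mul_assoc,
    ← Matrix.mul_assoc Rᵀ R Aᵀ, hR, Matrix.one_mul]

lemma aux_gramProj_mul_unit {m : ℕ} (A : Matrix (Fin m) (Fin 3 ⊕ Fin 1) ℝ)
    (S : Matrix (Fin 3 ⊕ Fin 1) (Fin 3 ⊕ Fin 1) ℝ) (hS : IsUnit S.det) :
    gramProj (A * S) = gramProj A := by
  unfold gramProj
  have hST : IsUnit Sᵀ.det := by rwa [Matrix.det_transpose]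
  have h1 : (A * S)ᵀ * (A * S) = Sᵀ * (Aᵀ * A) * S := by
    rw [transpose_mul]
    rw [Matrix.mul_assoc, Matrix.mul_assoc, Matrix.mul_assoc]
  have h2 : ((A * S)ᵀ * (A * S))⁻¹ = S⁻¹ * ((Aᵀ * A)⁻¹ * (Sᵀ)⁻¹) := by
    rw [h1, Matrix.mul_inv_rev, Matrix.mul_inv_rev]
  congr 1
  rw [h2, transpose_mul]
  calc A * S * (S⁻¹ * ((Aᵀ * A)⁻¹ * Sᵀ⁻¹)) * (Sᵀ * Aᵀ)
      = A * (S * (S⁻¹ * ((Aᵀ * A)⁻¹ * (Sᵀ⁻¹ * (Sᵀ * Aᵀ))))) := by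
        simp only [Matrix.mul_assoc]
    _ = A * (Aᵀ * A)⁻¹ * Aᵀ := by
        rw [Matrix.nonsing_inv_mul_cancel_left _ _ hST,
          Matrix.mul_nonsing_inv_cancel_left _ _ hS, Matrix.mul_assoc]

/-- The block matrix encoding the rigid motion on homogeneous coordinates. -/
noncomputable def rigidBlock (R : Matrix (Fin 3) (Fin 3) ℝ) (t : Fin 3 → ℝ) :
    Matrix (Fin 3 ⊕ Fin 1) (Fin 3 ⊕ Fin 1) ℝ :=
  Matrix.fromBlocks Rᵀ 0 (Matrix.of fun _ j => t j) 1

lemma aux_rigidBlock_det (R : Matrix (Fin 3) (Fin 3) ℝ) (hdet : R.det = 1)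
    (t : Fin 3 → ℝ) : IsUnit (rigidBlock R t).det := by
  rw [rigidBlock, Matrix.det_fromBlocks_zero₁₂, Matrix.det_transpose, hdet,
    Matrix.det_one, one_mul]
  exact isUnit_one

lemma aux_homog_affine {m : ℕ} (X : Matrix (Fin m) (Fin 3) ℝ)
    (R : Matrix (Fin 3) (Fin 3) ℝ) (t : Fin 3 → ℝ) :
    homog (X * Rᵀ + vecMulVec (1 : Fin m → ℝ) t) = homog X * rigidBlock R t := by
  rw [homog, homog, rigidBlock, Matrix.fromCols_mul_fromBlocks, Matrix.mul_zero,
    zero_add, Matrix.mul_one]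
  ext i j
  cases j <;>
    simp [Matrix.fromCols, Matrix.add_apply, Matrix.mul_apply, vecMulVec]

lemma aux_plbo_affine {m : ℕ} (X : Matrix (Fin m) (Fin 3) ℝ)
    (L : Matrix (Fin m) (Fin m) ℝ)
    (R : Matrix (Fin 3) (Fin 3) ℝ) (hdet : R.det = 1) (t : Fin 3 → ℝ) :
    plbo (X * Rᵀ + vecMulVec (1 : Fin m → ℝ) t) L = plbo X L := by
  unfold plbo
  rw [aux_homog_affine X R t, aux_gramProj_mul_unit _ _ (aux_rigidBlock_det R hdet t)]

lemma aux_gramProj_mul_self {m : ℕ} (A : Matrix (Fin m) (Fin 3 ⊕ Fin 1) ℝ)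
    (hA : IsUnit (Aᵀ * A)) : gramProj A * A = 0 := by
  unfold gramProj
  rw [Matrix.sub_mul, Matrix.one_mul, Matrix.mul_assoc, Matrix.mul_assoc,
    Matrix.nonsing_inv_mul _
      ((Matrix.isUnit_iff_isUnit_det _).mp hA), Matrix.mul_one, sub_self]

lemma aux_vecMulVec_eq_homog {m : ℕ} (Y : Matrix (Fin m) (Fin 3) ℝ) (t : Fin 3 → ℝ) :
    vecMulVec (1 : Fin m → ℝ) t
      = homog Y * Matrix.fromRows (0 : Matrix (Fin 3) (Fin 3) ℝ)
          (Matrix.of fun (_ : Fin 1) j => t j) := by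
  rw [homog, Matrix.fromCols_mul_fromRows, Matrix.mul_zero, zero_add]
  ext i j
  simp [Matrix.mul_apply, vecMulVec]

lemma aux_plbo_mul_vecMulVec {m : ℕ} (Y : Matrix (Fin m) (Fin 3) ℝ)
    (L : Matrix (Fin m) (Fin m) ℝ) (hgY : IsUnit ((homog Y)ᵀ * homog Y))
    (t : Fin 3 → ℝ) : plbo Y L * vecMulVec (1 : Fin m → ℝ) t = 0 := by
  rw [aux_vecMulVec_eq_homog Y t, plbo, Matrix.mul_assoc, Matrix.mul_assoc,
    ← Matrix.mul_assoc (gramProj (homog Y)) (homog Y), aux_gramProj_mul_self _ hgY,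
    Matrix.zero_mul, Matrix.mul_zero, Matrix.mul_zero]

lemma aux_submatrix_mul {m k : ℕ} {p : ℕ} (A : Matrix (Fin m) (Fin 3) ℝ)
    (B : Matrix (Fin 3) (Fin 3) ℝ) (f : Fin p → Fin m) :
    (A * B).submatrix f id = A.submatrix f id * B := by
  ext i j
  simp [Matrix.mul_apply]

lemma aux_submatrix_vmv {m p : ℕ} (t : Fin 3 → ℝ) (f : Fin p → Fin m) :
    (vecMulVec (1 : Fin m → ℝ) t).submatrix f id = vecMulVec (1 : Fin p → ℝ) t := by
  ext i j
  simp [vecMulVec]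

lemma aux_perm_mul_vmv {p : ℕ} (Q : Matrix (Fin p) (Fin p) ℝ)
    (hQ : Q *ᵥ (1 : Fin p → ℝ) = 1) (t : Fin 3 → ℝ) :
    Q * vecMulVec (1 : Fin p → ℝ) t = vecMulVec (1 : Fin p → ℝ) t := by
  ext i j
  have := congrFun hQ i
  simp only [Matrix.mulVec, dotProduct, Pi.one_apply, mul_one] at this
  simp [Matrix.mul_apply, vecMulVec, ← Finset.sum_mul, this]

theorem stmt14 {n M N : ℕ}
    (X : Matrix (Fin M) (Fin 3) ℝ) (Y : Matrix (Fin N) (Fin 3) ℝ)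
    (hgX : IsUnit ((homog X)ᵀ * homog X)) (hgY : IsUnit ((homog Y)ᵀ * homog Y))
    (ι : Fin n → Fin M) (κ : Fin n → Fin N)
    (LX : Matrix (Fin M) (Fin M) ℝ) (LY : Matrix (Fin N) (Fin N) ℝ)
    (hX hY : Fin n → ℝ) (dX dY : ℝ) (hdX : 0 < dX) (hdY : 0 < dY)
    (lamDef lamOri : ℝ) (hld : 0 ≤ lamDef) (hlo : 0 ≤ lamOri)
    (R : Matrix (Fin 3) (Fin 3) ℝ) (hR : Rᵀ * R = 1) (hdet : R.det = 1)
    (t : Fin 3 → ℝ)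
    (P : Matrix (Fin n) (Fin n) ℝ)
    (Xh : Matrix (Fin M) (Fin 3) ℝ) (Yh : Matrix (Fin N) (Fin 3) ℝ)
    (hPfeas : IsPermMat P)
    (hmin : ∀ (P' : Matrix (Fin n) (Fin n) ℝ) (Xh' : Matrix (Fin M) (Fin 3) ℝ)
        (Yh' : Matrix (Fin N) (Fin 3) ℝ), IsPermMat P' →
        objE lamDef lamOri ι κ X Y (plbo X LX) (plbo Y LY) hX hY dX dY P Xh Yh ≤
          objE lamDef lamOri ι κ X Y (plbo X LX) (plbo Y LY) hX hY dX dY P' Xh' Yh') :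
    ∀ (P' : Matrix (Fin n) (Fin n) ℝ) (Xh' : Matrix (Fin M) (Fin 3) ℝ)
      (Yh' : Matrix (Fin N) (Fin 3) ℝ), IsPermMat P' →
      objE lamDef lamOri ι κ (X * Rᵀ + vecMulVec (1 : Fin M → ℝ) t) Y
          (plbo (X * Rᵀ + vecMulVec (1 : Fin M → ℝ) t) LX) (plbo Y LY)
          hX hY dX dY P Xh (Yh * Rᵀ + vecMulVec (1 : Fin N → ℝ) t) ≤
        objE lamDef lamOri ι κ (X * Rᵀ + vecMulVec (1 : Fin M → ℝ) t) Y
          (plbo (X * Rᵀ + vecMulVec (1 : Fin M → ℝ) t) LX) (plbo Y LY)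
          hX hY dX dY P' Xh' Yh' := by
  -- Key: for any feasible Q and any Yh₀, the transformed objective at (Q, Xh', Yh₀Rᵀ+𝟏tᵀ)
  -- equals the original objective at (Q, Xh', Yh₀).
  have key : ∀ (Q : Matrix (Fin n) (Fin n) ℝ), Qᵀ *ᵥ (1 : Fin n → ℝ) = 1 →
      ∀ (Xh' : Matrix (Fin M) (Fin 3) ℝ) (Yh₀ : Matrix (Fin N) (Fin 3) ℝ),
      objE lamDef lamOri ι κ (X * Rᵀ + vecMulVec (1 : Fin M → ℝ) t) Y
          (plbo (X * Rᵀ + vecMulVec (1 : Fin M → ℝ) t) LX) (plbo Y LY)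
          hX hY dX dY Q Xh' (Yh₀ * Rᵀ + vecMulVec (1 : Fin N → ℝ) t)
        = objE lamDef lamOri ι κ X Y (plbo X LX) (plbo Y LY) hX hY dX dY Q Xh' Yh₀ := by
    intro Q hQ Xh' Yh₀
    have e1 : plbo (X * Rᵀ + vecMulVec (1 : Fin M → ℝ) t) LX = plbo X LX :=
      aux_plbo_affine X LX R hdet t
    have e2 : (Yh₀ * Rᵀ + vecMulVec (1 : Fin N → ℝ) t).submatrix κ id
          - Qᵀ * ((X * Rᵀ + vecMulVec (1 : Fin M → ℝ) t).submatrix ι id)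
        = (Yh₀.submatrix κ id - Qᵀ * X.submatrix ι id) * Rᵀ := by
      simp only [Matrix.submatrix_add, Pi.add_apply, aux_submatrix_mul,
        aux_submatrix_vmv, Matrix.mul_add, aux_perm_mul_vmv Qᵀ hQ,
        Matrix.sub_mul, Matrix.mul_assoc]
      abel
    have e3 : plbo Y LY * (Yh₀ * Rᵀ + vecMulVec (1 : Fin N → ℝ) t)
        = (plbo Y LY * Yh₀) * Rᵀ := by
      rw [Matrix.mul_add, aux_plbo_mul_vecMulVec Y LY hgY, add_zero, Matrix.mul_assoc]
    rw [objE, objE, e1, e2, e3, aux_frob_mul_orth _ R hR, aux_frob_mul_orth _ R hR]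
  intro P' Xh' Yh' hfeas
  have hRRT : R * Rᵀ = 1 := mul_eq_one_comm.mp hR
  set Yh₀ : Matrix (Fin N) (Fin 3) ℝ := (Yh' - vecMulVec (1 : Fin N → ℝ) t) * R with hY0
  have hYh' : Yh₀ * Rᵀ + vecMulVec (1 : Fin N → ℝ) t = Yh' := by
    rw [hY0, Matrix.mul_assoc, hRRT, Matrix.mul_one, sub_add_cancel]
  calc objE lamDef lamOri ι κ (X * Rᵀ + vecMulVec (1 : Fin M → ℝ) t) Y
          (plbo (X * Rᵀ + vecMulVec (1 : Fin M → ℝ) t) LX) (plbo Y LY)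
          hX hY dX dY P Xh (Yh * Rᵀ + vecMulVec (1 : Fin N → ℝ) t)
      = objE lamDef lamOri ι κ X Y (plbo X LX) (plbo Y LY) hX hY dX dY P Xh Yh :=
        key P hPfeas.2.2 Xh Yh
    _ ≤ objE lamDef lamOri ι κ X Y (plbo X LX) (plbo Y LY) hX hY dX dY P' Xh' Yh₀ :=
        hmin P' Xh' Yh₀ hfeas
    _ = objE lamDef lamOri ι κ (X * Rᵀ + vecMulVec (1 : Fin M → ℝ) t) Y
          (plbo (X * Rᵀ + vecMulVec (1 : Fin M → ℝ) t) LX) (plbo Y LY)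
          hX hY dX dY P' Xh' (Yh₀ * Rᵀ + vecMulVec (1 : Fin N → ℝ) t) :=
        (key P' hfeas.2.2 Xh' Yh₀).symm
    _ = _ := by rw [hYh']
end

section
/- (Lemma 2a, objective-value identity.) Let X ∈ ℝ^{M×3} and Y ∈ ℝ^{N×3} with homogeneous coordinates having invertible Gram matrices, keypoint maps ι, κ, arbitrary stiffness matrices L_X, L_Y with PLBOs Δ_X, Δ_Y, orientation features h_X, h_Y ∈ ℝⁿ, diameters d_X, d_Y > 0 and weights λ_def, λ_ori ≥ 0. Let s > 0 and form the rescaled shape X' := sX with PLBO Δ_X' := Π(X̃')ᵀL_XΠ(X̃') where X̃' := (sX|𝟏), and rescaled diameter s·d_X. Then for every n×n matrix P, every X̂ ∈ ℝ^{M×3} and every Ŷ ∈ ℝ^{N×3}: E(sX, Y, Δ_X', Δ_Y, h_X, h_Y, s·d_X, d_Y; P, X̂, s·Ŷ) = E(X, Y, Δ_X, Δ_Y, h_X, h_Y, d_X, d_Y; P, X̂, Ŷ). -/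
open Matrix

lemma frobNorm_smul {m n : ℕ} (s : ℝ) (A : Matrix (Fin m) (Fin n) ℝ) :
    frobNorm (s • A) = |s| * frobNorm A := by
  unfold frobNorm
  rw [← Real.sqrt_sq_eq_abs, ← Real.sqrt_mul (sq_nonneg s)]
  congr 1
  simp [Matrix.smul_apply, mul_pow, Finset.mul_sum]

lemma gramProj_mul_diag {m k : Type*} [Fintype m] [DecidableEq m] [Fintype k]
    [DecidableEq k] (A : Matrix m k ℝ) (d : k → ℝ) (hd : ∀ i, d i ≠ 0) :
    gramProj (A * Matrix.diagonal d) = gramProj A := by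
  have hu : IsUnit (Matrix.diagonal d).det := by
    rw [Matrix.det_diagonal]
    exact isUnit_iff_ne_zero.mpr (Finset.prod_ne_zero_iff.mpr fun i _ => hd i)
  unfold gramProj
  rw [Matrix.transpose_mul, Matrix.diagonal_transpose]
  have h0 : Matrix.diagonal d * Aᵀ * (A * Matrix.diagonal d)
      = Matrix.diagonal d * (Aᵀ * A) * Matrix.diagonal d := by
    simp [Matrix.mul_assoc]
  rw [h0, Matrix.mul_inv_rev, Matrix.mul_inv_rev]
  have key : A * Matrix.diagonal d *
      ((Matrix.diagonal d)⁻¹ * ((Aᵀ * A)⁻¹ * (Matrix.diagonal d)⁻¹)) *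
      (Matrix.diagonal d * Aᵀ) = A * (Aᵀ * A)⁻¹ * Aᵀ := by
    calc A * Matrix.diagonal d *
        ((Matrix.diagonal d)⁻¹ * ((Aᵀ * A)⁻¹ * (Matrix.diagonal d)⁻¹)) *
        (Matrix.diagonal d * Aᵀ)
        = A * (Matrix.diagonal d * (Matrix.diagonal d)⁻¹) * (Aᵀ * A)⁻¹ *
          ((Matrix.diagonal d)⁻¹ * Matrix.diagonal d) * Aᵀ := by
          simp only [Matrix.mul_assoc]
      _ = A * (Aᵀ * A)⁻¹ * Aᵀ := by
          rw [Matrix.mul_nonsing_inv _ hu, Matrix.nonsing_inv_mul _ hu]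
          simp [Matrix.mul_assoc]
  rw [key]

lemma homog_smul {m : ℕ} (s : ℝ) (X : Matrix (Fin m) (Fin 3) ℝ) :
    homog (s • X) = homog X * Matrix.diagonal (Sum.elim (fun _ => s) fun _ => (1 : ℝ)) := by
  ext i j
  erw [Matrix.mul_diagonal]
  cases j with
  | inl j => simp [homog, Matrix.mul_diagonal, mul_comm]
  | inr j => simp [homog, Matrix.mul_diagonal]

lemma gramProj_homog_smul {m : ℕ} (s : ℝ) (hs : s ≠ 0) (X : Matrix (Fin m) (Fin 3) ℝ) :
    gramProj (homog (s • X)) = gramProj (homog X) := by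
  rw [homog_smul]
  exact gramProj_mul_diag _ _ (by rintro (i | i) <;> simp [hs])

lemma plbo_smul {m : ℕ} (s : ℝ) (hs : s ≠ 0) (X : Matrix (Fin m) (Fin 3) ℝ)
    (L : Matrix (Fin m) (Fin m) ℝ) : plbo (s • X) L = plbo X L := by
  unfold plbo
  rw [gramProj_homog_smul s hs]

theorem stmt15 {n M N : ℕ}
    (X : Matrix (Fin M) (Fin 3) ℝ) (Y : Matrix (Fin N) (Fin 3) ℝ)
    (hgX : IsUnit ((homog X)ᵀ * homog X)) (hgY : IsUnit ((homog Y)ᵀ * homog Y))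
    (ι : Fin n → Fin M) (κ : Fin n → Fin N)
    (LX : Matrix (Fin M) (Fin M) ℝ) (LY : Matrix (Fin N) (Fin N) ℝ)
    (hX hY : Fin n → ℝ) (dX dY : ℝ) (hdX : 0 < dX) (hdY : 0 < dY)
    (lamDef lamOri : ℝ) (hld : 0 ≤ lamDef) (hlo : 0 ≤ lamOri)
    (s : ℝ) (hs : 0 < s)
    (P : Matrix (Fin n) (Fin n) ℝ)
    (Xh : Matrix (Fin M) (Fin 3) ℝ) (Yh : Matrix (Fin N) (Fin 3) ℝ) :
    objE lamDef lamOri ι κ (s • X) Y (plbo (s • X) LX) (plbo Y LY)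
        hX hY (s * dX) dY P Xh (s • Yh) =
      objE lamDef lamOri ι κ X Y (plbo X LX) (plbo Y LY) hX hY dX dY P Xh Yh := by
  have hs' : s ≠ 0 := ne_of_gt hs
  rw [plbo_smul s hs']
  unfold objE
  have h2 : (s • Yh).submatrix κ id - Pᵀ * (s • X).submatrix ι id
      = s • (Yh.submatrix κ id - Pᵀ * X.submatrix ι id) := by
    simp [Matrix.submatrix_smul, Matrix.mul_smul, smul_sub]
  have h4 : plbo Y LY * (s • Yh) = s • (plbo Y LY * Yh) := by
    simp [Matrix.mul_smul]
  rw [h2, h4, frobNorm_smul, frobNorm_smul, abs_of_pos hs]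
  have hsub : (s • X).submatrix ι id = s • X.submatrix ι id := by
    simp [Matrix.submatrix_smul]
  linear_combination ((↑n)⁻¹ * dX⁻¹ * frobNorm (Yh.submatrix κ id - Pᵀ * X.submatrix ι id)
      + dX⁻¹ * lamDef * (↑N)⁻¹ * frobNorm (plbo Y LY * Yh)) * mul_inv_cancel₀ hs'
end
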